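/- Let P ∈ ℝ^{m×n}[ξ] and Q ∈ ℝ^{m×m}[ξ] with Q nonsingular and Q⁻¹P proper. Suppose (A,B,C,D) with A ∈ ℝ^{d×d} and (Â,B̂,Ĉ,D̂) with Â ∈ ℝ^{d̂×d̂} are both observable realizations of (P,Q). Then d = d̂ and there exists a nonsingular T ∈ ℝ^{d×d} such that Â = TAT⁻¹, B̂ = TB, Ĉ = CT⁻¹ and D̂ = D. -/

import Mathlib

open MeasureTheory Matrix Polynomial
open scoped ComplexOrder

noncomputable section

/-- real matrices of the indicated size -/
abbrev Mat (m n : ℕ) := Matrix (Fin m) (Fin n) ℝ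

/-- A function `u : ℝ → ℝⁿ` is locally square-integrable if it is Lebesgue measurable and
the integral of its square over every compact set is finite. -/
def LocL2 {n : ℕ} (u : ℝ → Fin n → ℝ) : Prop :=
  Measurable u ∧ ∀ K : Set ℝ, IsCompact K → ∀ i : Fin n,
    (∫⁻ t in K, ENNReal.ofReal ((u t i) ^ 2)) < ⊤

/-- the state trajectory `x(t) = e^{A(t−t₀)}x₀ + ∫_{t₀}^{t} e^{A(t−τ)}Bu(τ)dτ` -/
def stateSol {d n : ℕ} (A : Mat d d) (B : Mat d n) (t₀ : ℝ) (x₀ : Fin d → ℝ)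
    (u : ℝ → Fin n → ℝ) (t : ℝ) : Fin d → ℝ :=
  (NormedSpace.expSeries ℝ (Mat d d)).sum ((t - t₀) • A) *ᵥ x₀ +
    ∫ τ in t₀..t, (NormedSpace.expSeries ℝ (Mat d d)).sum ((t - τ) • A) *ᵥ (B *ᵥ u τ)

/-- the output trajectory `y(t) = Cx(t) + Du(t)` -/
def outputSol {d n m : ℕ} (A : Mat d d) (B : Mat d n) (C : Matrix (Fin m) (Fin d) ℝ)
    (D : Matrix (Fin m) (Fin n) ℝ) (t₀ : ℝ) (x₀ : Fin d → ℝ) (u : ℝ → Fin n → ℝ)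
    (t : ℝ) : Fin m → ℝ :=
  C *ᵥ stateSol A B t₀ x₀ u t + D *ᵥ u t

/-- the observability matrix col(C, CA, …, CA^{d−1}) -/
def obsMat {d m : ℕ} (A : Mat d d) (C : Matrix (Fin m) (Fin d) ℝ) :
    Matrix (Fin d × Fin m) (Fin d) ℝ :=
  Matrix.of fun p j => (C * A ^ (p.1 : ℕ)) p.2 j

/-- the substitution ξ ↦ −ξ on real polynomials, as a ring isomorphism -/
def negX : Polynomial ℝ ≃+* Polynomial ℝ where
  toFun p := p.comp (-Polynomial.X)
  invFun p := p.comp (-Polynomial.X)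
  left_inv p := by
    show (p.comp (-Polynomial.X)).comp (-Polynomial.X) = p
    rw [Polynomial.comp_assoc]
    simp
  right_inv p := by
    show (p.comp (-Polynomial.X)).comp (-Polynomial.X) = p
    rw [Polynomial.comp_assoc]
    simp
  map_add' p q := Polynomial.add_comp
  map_mul' p q := Polynomial.mul_comp p q (-Polynomial.X)

/-- the substitution ξ ↦ −ξ on real rational functions -/
def ratNeg : RatFunc ℝ →+* RatFunc ℝ :=
  RatFunc.mapRingHom (negX : Polynomial ℝ →+* Polynomial ℝ)
    (by
      intro p hp
      have hp0 : p ≠ 0 := nonZeroDivisors.ne_zero hp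
      refine Submonoid.mem_comap.mpr (mem_nonZeroDivisors_of_ne_zero ?_)
      intro h
      exact hp0 (negX.injective (by simpa using h)))

/-- embed real matrices into matrices of rational functions -/
def ratOf {m n : Type*} (M : Matrix m n ℝ) : Matrix m n (RatFunc ℝ) :=
  M.map (algebraMap ℝ (RatFunc ℝ))

/-- embed polynomial matrices into matrices of rational functions -/
def ratM {m n : Type*} (M : Matrix m n (Polynomial ℝ)) : Matrix m n (RatFunc ℝ) :=
  M.map (algebraMap (Polynomial ℝ) (RatFunc ℝ))

/-- the rational matrix `M(−ξ)ᵀ` -/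
def paraT {m n : Type*} (M : Matrix m n (RatFunc ℝ)) : Matrix n m (RatFunc ℝ) :=
  (M.map ratNeg)ᵀ

/-- the transfer function `H = D + C (ξI − A)⁻¹ B` -/
def transferFn {d n m : ℕ} (A : Matrix (Fin d) (Fin d) ℝ) (B : Matrix (Fin d) (Fin n) ℝ)
    (C : Matrix (Fin m) (Fin d) ℝ) (D : Matrix (Fin m) (Fin n) ℝ) :
    Matrix (Fin m) (Fin n) (RatFunc ℝ) :=
  ratOf D + ratOf C *
    (Matrix.diagonal (fun _ => (RatFunc.X : RatFunc ℝ)) - ratOf A)⁻¹ * ratOf B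

/-- evaluation of a real rational function at a complex point (junk value at poles) -/
def evalRat (f : RatFunc ℝ) (z : ℂ) : ℂ := RatFunc.eval (algebraMap ℝ ℂ) z f

/-- `Z` is a spectral factor of `Φ`: `Z(−ξ)ᵀZ(ξ) = Φ(ξ)`, no entry of `Z` has a pole in the
open right half-plane, and `Z(λ)` has full row rank for every `λ` there -/
def IsSpectralFactor {q k : ℕ} (Z : Matrix (Fin q) (Fin k) (RatFunc ℝ))
    (Φ : Matrix (Fin k) (Fin k) (RatFunc ℝ)) : Prop :=
  paraT Z * Z = Φ ∧
  (∀ (i : Fin q) (j : Fin k) (z : ℂ), 0 < z.re → Polynomial.aeval z ((Z i j).denom) ≠ 0) ∧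
  (∀ z : ℂ, 0 < z.re → (Matrix.of fun i j => evalRat (Z i j) z).rank = q)

/-- the rational matrix `W + L(ξI − A)⁻¹B` -/
def Zfac {d n q : ℕ} (A : Matrix (Fin d) (Fin d) ℝ) (B : Matrix (Fin d) (Fin n) ℝ)
    (L : Matrix (Fin q) (Fin d) ℝ) (W : Matrix (Fin q) (Fin n) ℝ) :
    Matrix (Fin q) (Fin n) (RatFunc ℝ) :=
  ratOf W + ratOf L *
    (Matrix.diagonal (fun _ => (RatFunc.X : RatFunc ℝ)) - ratOf A)⁻¹ * ratOf B

/-- a real rational function is proper if its numerator degree is at most its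
denominator degree -/
def ratProper (f : RatFunc ℝ) : Prop := f.num.degree ≤ f.denom.degree

/-- the limit of a rational function at infinity: the ratio of the leading coefficients when
the degrees agree, and `0` otherwise (in particular when the numerator degree is smaller) -/
def ratLimInf (f : RatFunc ℝ) : ℝ :=
  if f.num.degree = f.denom.degree then f.num.leadingCoeff / f.denom.leadingCoeff else 0

/-- a rational matrix is proper if every entry is proper -/
def ProperM {m n : Type*} (M : Matrix m n (RatFunc ℝ)) : Prop := ∀ i j, ratProper (M i j)

/-- the entrywise limit at infinity of a rational matrix -/
def limM {m n : Type*} (M : Matrix m n (RatFunc ℝ)) : Matrix m n ℝ :=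
  Matrix.of fun i j => ratLimInf (M i j)

/-- `(A,B,C,D)` is an observable realization of the polynomial matrix pair `(P,Q)` -/
def ObsRealization {d n m : ℕ} (A : Matrix (Fin d) (Fin d) ℝ) (B : Matrix (Fin d) (Fin n) ℝ)
    (C : Matrix (Fin m) (Fin d) ℝ) (D : Matrix (Fin m) (Fin n) ℝ)
    (P : Matrix (Fin m) (Fin n) (Polynomial ℝ)) (Q : Matrix (Fin m) (Fin m) (Polynomial ℝ)) :
    Prop :=
  (obsMat A C).rank = d ∧
  ∃ (M : Matrix (Fin m) (Fin m) (Polynomial ℝ)) (N : Matrix (Fin m) (Fin d) (Polynomial ℝ))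
    (U : Matrix (Fin d) (Fin m) (Polynomial ℝ)) (V : Matrix (Fin d) (Fin d) (Polynomial ℝ))
    (E : Matrix (Fin d) (Fin n) (Polynomial ℝ)) (F : Matrix (Fin d) (Fin m) (Polynomial ℝ)),
    (∃ c : ℝ, c ≠ 0 ∧ (Matrix.fromBlocks M N U V).det = Polynomial.C c) ∧
    M * D.map Polynomial.C + N * B.map Polynomial.C = P ∧
    M = Q ∧
    M * C.map Polynomial.C =
      N * ((Polynomial.X : Polynomial ℝ) • (1 : Matrix (Fin d) (Fin d) (Polynomial ℝ)) -
        A.map Polynomial.C) ∧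
    U * D.map Polynomial.C + V * B.map Polynomial.C = E ∧
    U = -F ∧
    V * ((Polynomial.X : Polynomial ℝ) • (1 : Matrix (Fin d) (Fin d) (Polynomial ℝ)) -
        A.map Polynomial.C) - U * C.map Polynomial.C = 1


set_option maxHeartbeats 1000000
set_option synthInstance.maxHeartbeats 400000

section Statement17Aux

open Polynomial Matrix

/-! ### Auxiliary lemmas about `ratM` and `ratOf` -/

private lemma ratM_apply {a b : Type*} (M : Matrix a b (Polynomial ℝ)) (i : a) (j : b) :
    ratM M i j = algebraMap (Polynomial ℝ) (RatFunc ℝ) (M i j) := rfl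

private lemma ratOf_apply {a b : Type*} (M : Matrix a b ℝ) (i : a) (j : b) :
    ratOf M i j = algebraMap ℝ (RatFunc ℝ) (M i j) := rfl

private lemma ratM_inj {a b : Type*} {M N : Matrix a b (Polynomial ℝ)}
    (h : ratM M = ratM N) : M = N := by
  refine Matrix.ext fun i j => ?_
  exact RatFunc.algebraMap_injective ℝ (congrFun (congrFun h i) j)

private lemma ratM_mul {a b c : Type*} [Fintype b] (M : Matrix a b (Polynomial ℝ))
    (N : Matrix b c (Polynomial ℝ)) : ratM (M * N) = ratM M * ratM N :=
  Matrix.map_mul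

private lemma ratM_add {a b : Type*} (M N : Matrix a b (Polynomial ℝ)) :
    ratM (M + N) = ratM M + ratM N := by
  refine Matrix.ext fun i j => ?_; simp [ratM_apply, Matrix.add_apply]

private lemma ratM_sub {a b : Type*} (M N : Matrix a b (Polynomial ℝ)) :
    ratM (M - N) = ratM M - ratM N := by
  refine Matrix.ext fun i j => ?_; simp [ratM_apply, Matrix.sub_apply]

private lemma ratM_neg {a b : Type*} (M : Matrix a b (Polynomial ℝ)) :
    ratM (-M) = -ratM M := by
  refine Matrix.ext fun i j => ?_; simp [ratM_apply, Matrix.neg_apply]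

private lemma ratM_zero {a b : Type*} : ratM (0 : Matrix a b (Polynomial ℝ)) = 0 := by
  refine Matrix.ext fun i j => ?_; simp [ratM_apply]

private lemma ratM_one {a : Type*} [DecidableEq a] [Fintype a] :
    ratM (1 : Matrix a a (Polynomial ℝ)) = 1 := by
  refine Matrix.ext fun i j => ?_; by_cases h : i = j <;> simp [ratM_apply, Matrix.one_apply, h]

private lemma ratM_smul {a b : Type*} (p : Polynomial ℝ) (M : Matrix a b (Polynomial ℝ)) :
    ratM (p • M) = algebraMap (Polynomial ℝ) (RatFunc ℝ) p • ratM M := by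
  refine Matrix.ext fun i j => ?_
  simp [ratM_apply, Matrix.smul_apply, smul_eq_mul, _root_.map_mul]

private lemma ratOf_eq_ratM {a b : Type*} (M : Matrix a b ℝ) :
    ratOf M = ratM (M.map Polynomial.C) := by
  refine Matrix.ext fun i j => ?_
  rw [ratOf_apply, ratM_apply, Matrix.map_apply,
    IsScalarTower.algebraMap_apply ℝ (Polynomial ℝ) (RatFunc ℝ), Polynomial.algebraMap_eq]

private lemma ratOf_mul {a b c : Type*} [Fintype b] (M : Matrix a b ℝ)
    (N : Matrix b c ℝ) : ratOf (M * N) = ratOf M * ratOf N :=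
  Matrix.map_mul

private lemma ratOf_sub {a b : Type*} (M N : Matrix a b ℝ) :
    ratOf (M - N) = ratOf M - ratOf N := by
  refine Matrix.ext fun i j => ?_; simp [ratOf_apply, Matrix.sub_apply]

private lemma ratOf_one {a : Type*} [DecidableEq a] [Fintype a] :
    ratOf (1 : Matrix a a ℝ) = 1 := by
  refine Matrix.ext fun i j => ?_; by_cases h : i = j <;> simp [ratOf_apply, Matrix.one_apply, h]

/-! ### The rational matrix `C (ξ I - A)⁻¹` -/

private lemma charm_eq {d : ℕ} (A : Mat d d) :
    (Polynomial.X : Polynomial ℝ) • (1 : Matrix (Fin d) (Fin d) (Polynomial ℝ)) -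
      A.map Polynomial.C = Matrix.charmatrix A := by
  refine Matrix.ext fun i j => ?_
  by_cases h : i = j <;>
    simp [Matrix.charmatrix_apply, Matrix.smul_apply, Matrix.one_apply, Matrix.sub_apply,
      Matrix.map_apply, Matrix.diagonal_apply, h, smul_eq_mul]

/-- the polynomial matrix `ξ I - A` seen over the rational functions -/
private noncomputable def RkM {d : ℕ} (A : Mat d d) : Matrix (Fin d) (Fin d) (RatFunc ℝ) :=
  ratM (Matrix.charmatrix A)

private lemma RkM_def {d : ℕ} (A : Mat d d) :
    RkM A = ratM (Matrix.charmatrix A) := rfl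

/-- the rational matrix `C (ξ I - A)⁻¹` -/
private noncomputable def GG {d m : ℕ} (A : Mat d d) (C : Matrix (Fin m) (Fin d) ℝ) :
    Matrix (Fin m) (Fin d) (RatFunc ℝ) :=
  ratOf C * (RkM A)⁻¹

private lemma GG_def {d m : ℕ} (A : Mat d d) (C : Matrix (Fin m) (Fin d) ℝ) :
    GG A C = ratOf C * (RkM A)⁻¹ := rfl

private lemma det_RkM {d : ℕ} (A : Mat d d) :
    (RkM A).det = algebraMap (Polynomial ℝ) (RatFunc ℝ) A.charpoly := by
  have h1 : RkM A =
      (algebraMap (Polynomial ℝ) (RatFunc ℝ)).mapMatrix (Matrix.charmatrix A) := rfl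
  rw [h1, ← RingHom.map_det]
  rfl

private lemma isUnit_det_RkM {d : ℕ} (A : Mat d d) : IsUnit (RkM A).det := by
  rw [det_RkM]
  exact isUnit_iff_ne_zero.mpr
    ((map_ne_zero_iff _ (RatFunc.algebraMap_injective ℝ)).mpr (A.charpoly_monic.ne_zero))

private lemma QG_rel {d m : ℕ} {A : Mat d d} {C : Matrix (Fin m) (Fin d) ℝ}
    {Q : Matrix (Fin m) (Fin m) (Polynomial ℝ)} {N : Matrix (Fin m) (Fin d) (Polynomial ℝ)}
    (h : Q * C.map Polynomial.C = N * Matrix.charmatrix A) :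
    ratM Q * GG A C = ratM N := by
  have h2 : ratM Q * ratOf C = ratM N * RkM A := by
    rw [ratOf_eq_ratM, ← ratM_mul, h, ratM_mul, RkM_def]
  rw [GG_def, ← Matrix.mul_assoc, h2, Matrix.mul_assoc,
    Matrix.mul_nonsing_inv _ (isUnit_det_RkM A), Matrix.mul_one]

private lemma ratM_adj {d : ℕ} (A : Mat d d) :
    ratM (Matrix.charmatrix A).adjugate =
      algebraMap (Polynomial ℝ) (RatFunc ℝ) A.charpoly • (RkM A)⁻¹ := by
  have hcp : (Matrix.charmatrix A).det = A.charpoly := rfl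
  have h1 : RkM A * ratM (Matrix.charmatrix A).adjugate =
      algebraMap (Polynomial ℝ) (RatFunc ℝ) A.charpoly •
        (1 : Matrix (Fin d) (Fin d) (RatFunc ℝ)) := by
    rw [RkM_def, ← ratM_mul, Matrix.mul_adjugate, hcp, ratM_smul, ratM_one]
  calc ratM (Matrix.charmatrix A).adjugate
      = ((RkM A)⁻¹ * RkM A) * ratM (Matrix.charmatrix A).adjugate := by
        rw [Matrix.nonsing_inv_mul _ (isUnit_det_RkM A), Matrix.one_mul]
    _ = (RkM A)⁻¹ * (RkM A * ratM (Matrix.charmatrix A).adjugate) := Matrix.mul_assoc _ _ _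
    _ = _ := by rw [h1, Matrix.mul_smul, Matrix.mul_one]

private lemma GG_clear {d m q : ℕ} (A : Mat d d) (C : Matrix (Fin m) (Fin d) ℝ)
    (Z : Matrix (Fin d) (Fin q) ℝ) :
    algebraMap (Polynomial ℝ) (RatFunc ℝ) A.charpoly • (GG A C * ratOf Z) =
      ratM (C.map Polynomial.C * (Matrix.charmatrix A).adjugate * Z.map Polynomial.C) := by
  rw [ratM_mul, ratM_mul, ← ratOf_eq_ratM, ← ratOf_eq_ratM, ratM_adj, GG_def,
    Matrix.mul_smul, Matrix.smul_mul]

/-! ### Degree bounds -/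

private lemma adj_deg {d : ℕ} (A : Mat d d) (k l : Fin d) :
    ((Matrix.charmatrix A).adjugate k l).degree < (d : WithBot ℕ) := by
  have hd : 0 < d := k.pos
  have hnat : ((Matrix.charmatrix A).adjugate k l).natDegree ≤ d - 1 := by
    rw [Matrix.adjugate_apply, Matrix.det_apply']
    refine Polynomial.natDegree_sum_le_of_forall_le _ _ ?_
    intro σ _
    refine le_trans (Polynomial.natDegree_mul_le) ?_
    have hsgn : ((((Equiv.Perm.sign σ : ℤ)) : Polynomial ℝ)).natDegree = 0 :=
      Polynomial.natDegree_intCast _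
    rw [hsgn, zero_add]
    refine le_trans (Polynomial.natDegree_prod_le _ _) ?_
    have hbound : ∀ x : Fin d,
        (((Matrix.charmatrix A).updateRow l (Pi.single k 1)) (σ x) x).natDegree
          ≤ if σ x = l then 0 else 1 := by
      intro x
      by_cases hx : σ x = l
      · rw [if_pos hx, Matrix.updateRow_apply, if_pos hx, Pi.single_apply]
        by_cases hxk : x = k
        · rw [if_pos hxk, Polynomial.natDegree_one]
        · rw [if_neg hxk, Polynomial.natDegree_zero]
      · rw [if_neg hx, Matrix.updateRow_apply, if_neg hx]
        by_cases hxx : σ x = x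
        · rw [hxx, Matrix.charmatrix_apply_eq, Polynomial.natDegree_X_sub_C]
        · rw [Matrix.charmatrix_apply_ne _ _ _ hxx]
          have hnc : (-(Polynomial.C (A (σ x) x))).natDegree = 0 := by
            rw [Polynomial.natDegree_neg, Polynomial.natDegree_C]
          omega
    refine le_trans (Finset.sum_le_sum fun x _ => hbound x) ?_
    have hfilter : (Finset.univ.filter fun x : Fin d => σ x = l) = {σ.symm l} := by
      ext x
      simp [Equiv.apply_eq_iff_eq_symm_apply]
    have hcard := Finset.card_filter_add_card_filter_not
      (s := (Finset.univ : Finset (Fin d))) (p := fun x : Fin d => σ x = l)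
    rw [hfilter] at hcard
    simp only [Finset.card_singleton, Finset.card_univ, Fintype.card_fin] at hcard
    rw [Finset.sum_ite, Finset.sum_const, Finset.sum_const, smul_eq_mul, smul_eq_mul,
      mul_zero, mul_one, zero_add]
    omega
  calc ((Matrix.charmatrix A).adjugate k l).degree
      ≤ (((Matrix.charmatrix A).adjugate k l).natDegree : WithBot ℕ) :=
        Polynomial.degree_le_natDegree
    _ ≤ ((d - 1 : ℕ) : WithBot ℕ) := by exact_mod_cast hnat
    _ < (d : WithBot ℕ) := by exact_mod_cast Nat.sub_lt hd Nat.one_pos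

private lemma bot_lt_nat (d : ℕ) : (⊥ : WithBot ℕ) < (d : WithBot ℕ) := by
  exact_mod_cast WithBot.bot_lt_coe (d : ℕ)

private lemma entry_deg {d m q : ℕ} (A : Mat d d) (C : Matrix (Fin m) (Fin d) ℝ)
    (Z : Matrix (Fin d) (Fin q) ℝ) (i : Fin m) (j : Fin q) :
    ((C.map Polynomial.C * (Matrix.charmatrix A).adjugate * Z.map Polynomial.C) i j).degree
      < (d : WithBot ℕ) := by
  rw [Matrix.mul_apply]
  refine lt_of_le_of_lt (Polynomial.degree_sum_le _ _) ?_
  rw [Finset.sup_lt_iff (bot_lt_nat d)]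
  intro l _
  have h1 : ((C.map Polynomial.C * (Matrix.charmatrix A).adjugate) i l).degree
      < (d : WithBot ℕ) := by
    rw [Matrix.mul_apply]
    refine lt_of_le_of_lt (Polynomial.degree_sum_le _ _) ?_
    rw [Finset.sup_lt_iff (bot_lt_nat d)]
    intro x _
    refine lt_of_le_of_lt (Polynomial.degree_mul_le _ _) ?_
    calc (C.map Polynomial.C i x).degree + ((Matrix.charmatrix A).adjugate x l).degree
        ≤ 0 + ((Matrix.charmatrix A).adjugate x l).degree :=
          add_le_add_left Polynomial.degree_C_le _
      _ = ((Matrix.charmatrix A).adjugate x l).degree := zero_add _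
      _ < (d : WithBot ℕ) := adj_deg A x l
  refine lt_of_le_of_lt (Polynomial.degree_mul_le _ _) ?_
  calc ((C.map Polynomial.C * (Matrix.charmatrix A).adjugate) i l).degree
        + (Z.map Polynomial.C l j).degree
      ≤ ((C.map Polynomial.C * (Matrix.charmatrix A).adjugate) i l).degree + 0 :=
        add_le_add_right Polynomial.degree_C_le _
    _ = ((C.map Polynomial.C * (Matrix.charmatrix A).adjugate) i l).degree := add_zero _
    _ < (d : WithBot ℕ) := h1

private lemma charpoly_deg {d : ℕ} (A : Mat d d) :
    (A.charpoly).degree = (d : WithBot ℕ) := by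
  rw [Matrix.charpoly_degree_eq_dim]
  simp

/-! ### The key "strictly proper" cancellation lemma -/

private lemma SP {d dh m q : ℕ} (A : Mat d d) (C : Matrix (Fin m) (Fin d) ℝ)
    (Ah : Mat dh dh) (Ch : Matrix (Fin m) (Fin dh) ℝ)
    (Z : Matrix (Fin d) (Fin q) ℝ) (Zh : Matrix (Fin dh) (Fin q) ℝ)
    (Δ : Matrix (Fin m) (Fin q) (Polynomial ℝ))
    (h : GG A C * ratOf Z = GG Ah Ch * ratOf Zh + ratM Δ) : Δ = 0 := by
  have e0 := congrArg (fun X : Matrix (Fin m) (Fin q) (RatFunc ℝ) =>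
      algebraMap (Polynomial ℝ) (RatFunc ℝ) Ah.charpoly •
        (algebraMap (Polynomial ℝ) (RatFunc ℝ) A.charpoly • X)) h
  simp only [smul_add] at e0
  rw [GG_clear A C Z, smul_smul,
    mul_comm (algebraMap (Polynomial ℝ) (RatFunc ℝ) Ah.charpoly)
      (algebraMap (Polynomial ℝ) (RatFunc ℝ) A.charpoly),
    ← smul_smul, GG_clear Ah Ch Zh] at e0
  simp only [← ratM_smul, ← ratM_add] at e0
  have key := ratM_inj e0
  refine Matrix.ext fun i j => ?_
  show Δ i j = 0
  by_contra hij
  have hent := congrFun (congrFun key i) j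
  simp only [Matrix.smul_apply, Matrix.add_apply, smul_eq_mul] at hent
  have hdE := entry_deg A C Z i j
  have hdF := entry_deg Ah Ch Zh i j
  set E := (C.map Polynomial.C * (Matrix.charmatrix A).adjugate * Z.map Polynomial.C) i j with hE
  set F := (Ch.map Polynomial.C * (Matrix.charmatrix Ah).adjugate * Zh.map Polynomial.C) i j
    with hF
  have h1 : (Ah.charpoly * E).degree < ((dh : WithBot ℕ) + (d : WithBot ℕ)) := by
    rw [Polynomial.degree_mul, charpoly_deg]
    exact WithBot.add_lt_add_left (by exact_mod_cast WithBot.coe_ne_bot) hdE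
  have h2 : (A.charpoly * F).degree < ((dh : WithBot ℕ) + (d : WithBot ℕ)) := by
    rw [Polynomial.degree_mul, charpoly_deg, add_comm ((dh : WithBot ℕ)) ((d : WithBot ℕ))]
    exact WithBot.add_lt_add_left (by exact_mod_cast WithBot.coe_ne_bot) hdF
  have h3 : ((dh : WithBot ℕ) + (d : WithBot ℕ)) ≤
      (Ah.charpoly * (A.charpoly * Δ i j)).degree := by
    rw [Polynomial.degree_mul, Polynomial.degree_mul, charpoly_deg, charpoly_deg, ← add_assoc]
    have h0 : (0 : WithBot ℕ) ≤ (Δ i j).degree := Polynomial.zero_le_degree_iff.mpr hij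
    calc ((dh : WithBot ℕ) + (d : WithBot ℕ))
        = ((dh : WithBot ℕ) + (d : WithBot ℕ)) + 0 := (add_zero _).symm
      _ ≤ ((dh : WithBot ℕ) + (d : WithBot ℕ)) + (Δ i j).degree := add_le_add_right h0 _
  have h4 : Ah.charpoly * (A.charpoly * Δ i j) = Ah.charpoly * E - A.charpoly * F := by
    rw [hent]; ring
  rw [h4] at h3
  have h5 : (Ah.charpoly * E - A.charpoly * F).degree
      < ((dh : WithBot ℕ) + (d : WithBot ℕ)) :=
    lt_of_le_of_lt (Polynomial.degree_sub_le _ _) (max_lt h1 h2)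
  exact absurd (lt_of_le_of_lt h3 h5) (lt_irrefl _)

/-! ### Markov parameters -/

private lemma GG_step {d m q : ℕ} (A : Mat d d) (C : Matrix (Fin m) (Fin d) ℝ)
    (Z : Matrix (Fin d) (Fin q) ℝ) :
    GG A C * ratOf (A * Z) =
      algebraMap (Polynomial ℝ) (RatFunc ℝ) Polynomial.X • (GG A C * ratOf Z)
        - ratOf (C * Z) := by
  have hcm : Matrix.charmatrix A * Z.map Polynomial.C =
      (Polynomial.X : Polynomial ℝ) • Z.map Polynomial.C - (A * Z).map Polynomial.C := by
    rw [← charm_eq, Matrix.sub_mul, Matrix.smul_mul, Matrix.one_mul, ← Matrix.map_mul]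
  have h2 : RkM A * ratOf Z =
      algebraMap (Polynomial ℝ) (RatFunc ℝ) Polynomial.X • ratOf Z - ratOf (A * Z) := by
    rw [RkM_def, ratOf_eq_ratM Z, ← ratM_mul, hcm, ratM_sub, ratM_smul, ← ratOf_eq_ratM,
      ← ratOf_eq_ratM]
  have h3 : ratOf (A * Z) =
      algebraMap (Polynomial ℝ) (RatFunc ℝ) Polynomial.X • ratOf Z - RkM A * ratOf Z := by
    rw [h2]; abel
  rw [h3, Matrix.mul_sub, Matrix.mul_smul]
  congr 1
  rw [GG_def, Matrix.mul_assoc, ← Matrix.mul_assoc ((RkM A)⁻¹),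
    Matrix.nonsing_inv_mul _ (isUnit_det_RkM A), Matrix.one_mul, ← ratOf_mul]

private lemma map_C_eq_zero {a b : Type*} {M : Matrix a b ℝ}
    (h : M.map Polynomial.C = 0) : M = 0 := by
  refine Matrix.ext fun i j => ?_
  have := congrFun (congrFun h i) j
  simpa using this

private lemma mstep {d dh m q : ℕ} (A : Mat d d) (C : Matrix (Fin m) (Fin d) ℝ)
    (Ah : Mat dh dh) (Ch : Matrix (Fin m) (Fin dh) ℝ)
    (Z : Matrix (Fin d) (Fin q) ℝ) (Zh : Matrix (Fin dh) (Fin q) ℝ)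
    (h : GG A C * ratOf Z = GG Ah Ch * ratOf Zh) :
    C * Z = Ch * Zh ∧ GG A C * ratOf (A * Z) = GG Ah Ch * ratOf (Ah * Zh) := by
  have hdiff : GG A C * ratOf (A * Z) =
      GG Ah Ch * ratOf (Ah * Zh) + ratM ((Ch * Zh - C * Z).map Polynomial.C) := by
    rw [GG_step A C Z, GG_step Ah Ch Zh, h, ← ratOf_eq_ratM, ratOf_sub]
    abel
  have hΔ := SP A C Ah Ch (A * Z) (Ah * Zh) _ hdiff
  have h0 : Ch * Zh - C * Z = 0 := map_C_eq_zero hΔ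
  constructor
  · exact (sub_eq_zero.mp h0).symm
  · rw [hdiff, hΔ, ratM_zero, add_zero]

private lemma markov {d dh m q : ℕ} (A : Mat d d) (C : Matrix (Fin m) (Fin d) ℝ)
    (Ah : Mat dh dh) (Ch : Matrix (Fin m) (Fin dh) ℝ)
    (Z : Matrix (Fin d) (Fin q) ℝ) (Zh : Matrix (Fin dh) (Fin q) ℝ)
    (h : GG A C * ratOf Z = GG Ah Ch * ratOf Zh) (k : ℕ) :
    C * A ^ k * Z = Ch * Ah ^ k * Zh := by
  have key : ∀ k : ℕ, GG A C * ratOf (A ^ k * Z) = GG Ah Ch * ratOf (Ah ^ k * Zh) := by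
    intro k
    induction k with
    | zero => simpa using h
    | succ k ih =>
      have h2 := (mstep A C Ah Ch _ _ ih).2
      rw [← Matrix.mul_assoc, ← pow_succ', ← Matrix.mul_assoc, ← pow_succ'] at h2
      exact h2
  have h1 := (mstep A C Ah Ch _ _ (key k)).1
  rw [← Matrix.mul_assoc, ← Matrix.mul_assoc] at h1
  exact h1

/-! ### Observability -/

private lemma obs_cancel {d m q : ℕ} {A : Mat d d} {C : Matrix (Fin m) (Fin d) ℝ}
    (hobs : (obsMat A C).rank = d) {Z : Matrix (Fin d) (Fin q) ℝ}
    (hZ : ∀ k : ℕ, C * A ^ k * Z = 0) : Z = 0 := by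
  have hOZ : obsMat A C * Z = 0 := by
    refine Matrix.ext fun p j => ?_
    rw [Matrix.mul_apply, Matrix.zero_apply]
    have h1 := congrFun (congrFun (hZ p.1) p.2) j
    rw [Matrix.mul_apply, Matrix.zero_apply] at h1
    rw [← h1]
    exact Finset.sum_congr rfl fun l _ => rfl
  have hfin : Module.finrank ℝ (LinearMap.range (obsMat A C).mulVecLin) = d := hobs
  have hker : LinearMap.ker (obsMat A C).mulVecLin = ⊥ := by
    have hrn := LinearMap.finrank_range_add_finrank_ker (obsMat A C).mulVecLin
    rw [hfin] at hrn
    have hdom : Module.finrank ℝ (Fin d → ℝ) = d := by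
      simp [Module.finrank_pi]
    rw [hdom] at hrn
    have h0 : Module.finrank ℝ (LinearMap.ker (obsMat A C).mulVecLin) = 0 := by omega
    exact Submodule.finrank_eq_zero.mp h0
  have hinj := LinearMap.ker_eq_bot.mp hker
  refine Matrix.ext fun l j => ?_
  show Z l j = 0
  have hcol : (obsMat A C).mulVecLin (fun l' => Z l' j) = 0 := by
    funext p
    have h1 := congrFun (congrFun hOZ p) j
    rw [Matrix.mul_apply, Matrix.zero_apply] at h1
    simpa [Matrix.mulVecLin_apply, Matrix.mulVec, dotProduct] using h1
  have h2 : (fun l' => Z l' j) = (0 : Fin d → ℝ) := hinj (by rw [hcol]; rw [map_zero])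
  exact congrFun h2 l

/-! ### Division by the characteristic matrix -/

private lemma charm_pow_sub {d : ℕ} (A : Mat d d) (k : ℕ) :
    ∃ S : Matrix (Fin d) (Fin d) (Polynomial ℝ),
      (Polynomial.X ^ k : Polynomial ℝ) • (1 : Matrix (Fin d) (Fin d) (Polynomial ℝ)) -
        (A ^ k).map Polynomial.C = Matrix.charmatrix A * S := by
  induction k with
  | zero =>
    refine ⟨0, ?_⟩
    rw [pow_zero, pow_zero, one_smul, Matrix.map_one Polynomial.C Polynomial.C_0 Polynomial.C_1,
      sub_self, mul_zero]
  | succ k ih =>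
    obtain ⟨S, hS⟩ := ih
    refine ⟨(Polynomial.X : Polynomial ℝ) • S + (A ^ k).map Polynomial.C, ?_⟩
    have h1 : (Polynomial.X ^ (k+1) : Polynomial ℝ) •
        (1 : Matrix (Fin d) (Fin d) (Polynomial ℝ)) =
        (Polynomial.X : Polynomial ℝ) • ((Polynomial.X ^ k : Polynomial ℝ) •
          (1 : Matrix (Fin d) (Fin d) (Polynomial ℝ))) := by
      rw [pow_succ', mul_smul Polynomial.X (Polynomial.X ^ k)
        (1 : Matrix (Fin d) (Fin d) (Polynomial ℝ))]
    have h2 : (A ^ (k+1)).map Polynomial.C =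
        A.map Polynomial.C * (A ^ k).map Polynomial.C := by
      rw [pow_succ', Matrix.map_mul]
    have h3 : (Polynomial.X ^ k : Polynomial ℝ) • (1 : Matrix (Fin d) (Fin d) (Polynomial ℝ))
        = Matrix.charmatrix A * S + (A ^ k).map Polynomial.C := by
      rw [← hS]; abel
    have h4 : Matrix.charmatrix A * ((A ^ k).map Polynomial.C) =
        (Polynomial.X : Polynomial ℝ) • ((A ^ k).map Polynomial.C)
          - A.map Polynomial.C * (A ^ k).map Polynomial.C := by
      rw [← charm_eq, Matrix.sub_mul, Matrix.smul_mul, Matrix.one_mul]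
    rw [h1, h2, h3, Matrix.mul_add, Matrix.mul_smul, h4, smul_add]
    abel

private lemma div_charm {d q : ℕ} (A : Mat d d) (Z : Matrix (Fin d) (Fin q) (Polynomial ℝ)) :
    ∃ (S : Matrix (Fin d) (Fin q) (Polynomial ℝ)) (Z0 : Matrix (Fin d) (Fin q) ℝ),
      Z = Matrix.charmatrix A * S + Z0.map Polynomial.C := by
  classical
  set Dm := (Finset.univ : Finset (Fin d × Fin q)).sup
      (fun p : Fin d × Fin q => (Z p.1 p.2).natDegree) with hDm
  have hdeg : ∀ i j, (Z i j).natDegree < Dm + 1 := by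
    intro i j
    have hle := Finset.le_sup (f := fun p : Fin d × Fin q => (Z p.1 p.2).natDegree)
      (Finset.mem_univ (i, j))
    exact Nat.lt_succ_of_le hle
  have hZsum : Z = ∑ k ∈ Finset.range (Dm + 1),
      (Polynomial.X ^ k : Polynomial ℝ) • (Z.map (fun p => p.coeff k)).map Polynomial.C := by
    refine Matrix.ext fun i j => ?_
    rw [Matrix.sum_apply]
    conv_lhs => rw [Polynomial.as_sum_range' _ _ (hdeg i j)]
    refine Finset.sum_congr rfl fun k _ => ?_
    rw [Matrix.smul_apply, Matrix.map_apply, Matrix.map_apply, smul_eq_mul, mul_comm,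
      Polynomial.C_mul_X_pow_eq_monomial]
  choose Sf hSf using charm_pow_sub A
  refine ⟨∑ k ∈ Finset.range (Dm + 1), Sf k * (Z.map (fun p => p.coeff k)).map Polynomial.C,
      ∑ k ∈ Finset.range (Dm + 1), A ^ k * Z.map (fun p => p.coeff k), ?_⟩
  have hmap : ((∑ k ∈ Finset.range (Dm + 1),
        A ^ k * Z.map (fun p => p.coeff k)).map Polynomial.C :
          Matrix (Fin d) (Fin q) (Polynomial ℝ))
      = ∑ k ∈ Finset.range (Dm + 1),
        ((A ^ k).map Polynomial.C) * (Z.map (fun p => p.coeff k)).map Polynomial.C := by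
    refine Matrix.ext fun i j => ?_
    simp [Matrix.map_apply, Matrix.sum_apply, Matrix.mul_apply, map_sum, _root_.map_mul]
  rw [hmap, Matrix.mul_sum, ← Finset.sum_add_distrib]
  conv_lhs => rw [hZsum]
  refine Finset.sum_congr rfl fun k _ => ?_
  rw [← Matrix.mul_assoc, ← hSf k, Matrix.sub_mul, Matrix.smul_mul, Matrix.one_mul]
  abel

/-! ### The representation lemma -/

private lemma rep {d dh m : ℕ} (A : Mat d d) (C : Matrix (Fin m) (Fin d) ℝ)
    (Q : Matrix (Fin m) (Fin m) (Polynomial ℝ)) (N : Matrix (Fin m) (Fin d) (Polynomial ℝ))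
    (U : Matrix (Fin d) (Fin m) (Polynomial ℝ)) (V : Matrix (Fin d) (Fin d) (Polynomial ℝ))
    (c : ℝ) (hc : c ≠ 0)
    (hdet : (Matrix.fromBlocks Q N U V).det = Polynomial.C c)
    (hNC : Q * C.map Polynomial.C = N * Matrix.charmatrix A)
    (hV : V * Matrix.charmatrix A - U * C.map Polynomial.C = 1)
    (Ah : Mat dh dh) (Ch : Matrix (Fin m) (Fin dh) ℝ)
    (Nh : Matrix (Fin m) (Fin dh) (Polynomial ℝ))
    (hQGh : ratM Q * GG Ah Ch = ratM Nh) :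
    ∃ T : Matrix (Fin d) (Fin dh) ℝ, GG Ah Ch = GG A C * ratOf T := by
  classical
  have hu : IsUnit (Matrix.fromBlocks Q N U V).det := by
    rw [hdet]; exact Polynomial.isUnit_C.mpr (isUnit_iff_ne_zero.mpr hc)
  have hΨΦ : (Matrix.fromBlocks Q N U V)⁻¹ * Matrix.fromBlocks Q N U V = 1 :=
    Matrix.nonsing_inv_mul _ hu
  have hΦΨ : Matrix.fromBlocks Q N U V * (Matrix.fromBlocks Q N U V)⁻¹ = 1 :=
    Matrix.mul_nonsing_inv _ hu
  set Ψ := (Matrix.fromBlocks Q N U V)⁻¹ with hΨdef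
  have hΨ : Ψ = Matrix.fromBlocks Ψ.toBlocks₁₁ Ψ.toBlocks₁₂ Ψ.toBlocks₂₁ Ψ.toBlocks₂₂ :=
    (Matrix.fromBlocks_toBlocks _).symm
  have hΦΨ' := hΦΨ
  rw [hΨ, Matrix.fromBlocks_multiply, ← Matrix.fromBlocks_one, Matrix.fromBlocks_inj] at hΦΨ'
  obtain ⟨e11, -, e21, -⟩ := hΦΨ'
  set Y : Matrix (Fin m ⊕ Fin d) (Fin m ⊕ Fin d) (Polynomial ℝ) :=
      Matrix.fromBlocks Ψ.toBlocks₁₁ (-(C.map Polynomial.C))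
        Ψ.toBlocks₂₁ (Matrix.charmatrix A) with hYdef
  have hΦY : Matrix.fromBlocks Q N U V * Y = 1 := by
    rw [hYdef, Matrix.fromBlocks_multiply, ← Matrix.fromBlocks_one, Matrix.fromBlocks_inj]
    refine ⟨e11, ?_, e21, ?_⟩
    · rw [Matrix.mul_neg, hNC, neg_add_cancel]
    · rw [Matrix.mul_neg, ← hV]; abel
  have hYΨ : Y = Ψ := by
    calc Y = 1 * Y := (one_mul _).symm
      _ = (Ψ * Matrix.fromBlocks Q N U V) * Y := by rw [hΨΦ]
      _ = Ψ * (Matrix.fromBlocks Q N U V * Y) := mul_assoc _ _ _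
      _ = Ψ := by rw [hΦY, mul_one]
  have hYΦ : Y * Matrix.fromBlocks Q N U V = 1 := by
    rw [hYΨ]; exact hΨΦ
  rw [hYdef, Matrix.fromBlocks_multiply, ← Matrix.fromBlocks_one, Matrix.fromBlocks_inj] at hYΦ
  obtain ⟨f11, -, f21, -⟩ := hYΦ
  obtain ⟨S, Z0, hSZ⟩ := div_charm A (Ψ.toBlocks₂₁ * Nh)
  refine ⟨Z0, ?_⟩
  have hf11 : Ψ.toBlocks₁₁ * Q - C.map Polynomial.C * U = 1 := by
    rw [← f11, Matrix.neg_mul]; abel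
  have hc2 : Matrix.charmatrix A * U = -(Ψ.toBlocks₂₁ * Q) := by
    rw [eq_neg_iff_add_eq_zero, add_comm]; exact f21
  have hU : RkM A * ratM U = -(ratM Ψ.toBlocks₂₁ * ratM Q) := by
    rw [RkM_def, ← ratM_mul, hc2, ratM_neg, ratM_mul]
  have hUg : ratM U * GG Ah Ch = -((RkM A)⁻¹ * ratM (Ψ.toBlocks₂₁ * Nh)) := by
    calc ratM U * GG Ah Ch
        = ((RkM A)⁻¹ * (RkM A * ratM U)) * GG Ah Ch := by
          rw [← Matrix.mul_assoc, Matrix.nonsing_inv_mul _ (isUnit_det_RkM A), Matrix.one_mul]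
      _ = -((RkM A)⁻¹ * (ratM Ψ.toBlocks₂₁ * (ratM Q * GG Ah Ch))) := by
          rw [hU, Matrix.mul_neg, Matrix.neg_mul, Matrix.mul_assoc, Matrix.mul_assoc]
      _ = -((RkM A)⁻¹ * (ratM Ψ.toBlocks₂₁ * ratM Nh)) := by rw [hQGh]
      _ = -((RkM A)⁻¹ * ratM (Ψ.toBlocks₂₁ * Nh)) := by rw [ratM_mul]
  have hsplit : (RkM A)⁻¹ * ratM (Ψ.toBlocks₂₁ * Nh) =
      ratM S + (RkM A)⁻¹ * ratM (Z0.map Polynomial.C) := by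
    rw [hSZ, ratM_add, ratM_mul, ← RkM_def, Matrix.mul_add, ← Matrix.mul_assoc,
      Matrix.nonsing_inv_mul _ (isUnit_det_RkM A), Matrix.one_mul]
  have hmain : GG Ah Ch = ratM (Ψ.toBlocks₁₁ * Nh + C.map Polynomial.C * S)
      + GG A C * ratOf Z0 := by
    calc GG Ah Ch = 1 * GG Ah Ch := (Matrix.one_mul _).symm
      _ = ((ratM Ψ.toBlocks₁₁ * ratM Q - ratM (C.map Polynomial.C) * ratM U) * GG Ah Ch) := by
          rw [← ratM_mul, ← ratM_mul, ← ratM_sub, hf11, ratM_one]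
      _ = ratM Ψ.toBlocks₁₁ * (ratM Q * GG Ah Ch)
            - ratM (C.map Polynomial.C) * (ratM U * GG Ah Ch) := by
          rw [Matrix.sub_mul, Matrix.mul_assoc, Matrix.mul_assoc]
      _ = ratM Ψ.toBlocks₁₁ * ratM Nh
            + ratM (C.map Polynomial.C) * ((RkM A)⁻¹ * ratM (Ψ.toBlocks₂₁ * Nh)) := by
          rw [hQGh, hUg, Matrix.mul_neg, sub_neg_eq_add]
      _ = ratM Ψ.toBlocks₁₁ * ratM Nh + (ratM (C.map Polynomial.C) * ratM S
            + ratM (C.map Polynomial.C) * ((RkM A)⁻¹ * ratM (Z0.map Polynomial.C))) := by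
          rw [hsplit, Matrix.mul_add]
      _ = ratM (Ψ.toBlocks₁₁ * Nh + C.map Polynomial.C * S) + GG A C * ratOf Z0 := by
          rw [ratM_add, ratM_mul, ratM_mul, GG_def, ratOf_eq_ratM C, ratOf_eq_ratM Z0,
            Matrix.mul_assoc]
          abel
  have hsp : GG Ah Ch * ratOf (1 : Matrix (Fin dh) (Fin dh) ℝ) =
      GG A C * ratOf Z0 + ratM (Ψ.toBlocks₁₁ * Nh + C.map Polynomial.C * S) := by
    rw [ratOf_one, Matrix.mul_one, hmain]
    abel
  have hΔ := SP Ah Ch A C 1 Z0 _ hsp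
  rw [hΔ, ratM_zero, zero_add] at hmain
  exact hmain

end Statement17Aux

/-- uniqueness of observable realizations up to state-space isomorphism. -/
theorem statement17 {d dh n m : ℕ}
    (A : Mat d d) (B : Mat d n) (C : Matrix (Fin m) (Fin d) ℝ) (D : Matrix (Fin m) (Fin n) ℝ)
    (Ah : Mat dh dh) (Bh : Matrix (Fin dh) (Fin n) ℝ) (Ch : Matrix (Fin m) (Fin dh) ℝ)
    (Dh : Matrix (Fin m) (Fin n) ℝ)
    (P : Matrix (Fin m) (Fin n) (Polynomial ℝ)) (Q : Matrix (Fin m) (Fin m) (Polynomial ℝ))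
    (hQ : Q.det ≠ 0) (hprop : ProperM ((ratM Q)⁻¹ * ratM P))
    (h1 : ObsRealization A B C D P Q) (h2 : ObsRealization Ah Bh Ch Dh P Q) :
    ∃ (h : d = dh) (T : Mat d d), IsUnit T.det ∧
      Ah.submatrix (Fin.cast h) (Fin.cast h) * T = T * A ∧
      Bh.submatrix (Fin.cast h) id = T * B ∧
      Ch.submatrix id (Fin.cast h) * T = C ∧
      Dh = D := by
  classical
  obtain ⟨hobs1, M1, N1, U1, V1, E1, F1, ⟨c1, hc1, hdet1⟩, hPB1, hMQ1, hNC1, -, -, hV1⟩ := h1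
  obtain ⟨hobs2, M2, N2, U2, V2, E2, F2, ⟨c2, hc2, hdet2⟩, hPB2, hMQ2, hNC2, -, -, hV2⟩ := h2
  rw [hMQ1] at hdet1 hPB1 hNC1
  rw [hMQ2] at hdet2 hPB2 hNC2
  rw [charm_eq] at hNC1 hV1 hNC2 hV2
  have hQG1 : ratM Q * GG A C = ratM N1 := QG_rel hNC1
  have hQG2 : ratM Q * GG Ah Ch = ratM N2 := QG_rel hNC2
  obtain ⟨T1, hT1⟩ := rep A C Q N1 U1 V1 c1 hc1 hdet1 hNC1 hV1 Ah Ch N2 hQG2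
  obtain ⟨T2, hT2⟩ := rep Ah Ch Q N2 U2 V2 c2 hc2 hdet2 hNC2 hV2 A C N1 hQG1
  -- T1 * T2 = 1 and T2 * T1 = 1
  have hGT1 : GG A C * ratOf (T1 * T2) = GG A C * ratOf (1 : Mat d d) := by
    rw [ratOf_mul, ratOf_one, Matrix.mul_one, ← Matrix.mul_assoc, ← hT1, ← hT2]
  have hT1T2 : T1 * T2 = 1 := by
    have hmk := markov A C A C (T1 * T2) 1 hGT1
    have hz : ∀ k : ℕ, C * A ^ k * (T1 * T2 - 1) = 0 := by
      intro k
      rw [Matrix.mul_sub, hmk k, sub_self]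
    exact sub_eq_zero.mp (obs_cancel hobs1 hz)
  have hGT2 : GG Ah Ch * ratOf (T2 * T1) = GG Ah Ch * ratOf (1 : Mat dh dh) := by
    rw [ratOf_mul, ratOf_one, Matrix.mul_one, ← Matrix.mul_assoc, ← hT2, ← hT1]
  have hT2T1 : T2 * T1 = 1 := by
    have hmk := markov Ah Ch Ah Ch (T2 * T1) 1 hGT2
    have hz : ∀ k : ℕ, Ch * Ah ^ k * (T2 * T1 - 1) = 0 := by
      intro k
      rw [Matrix.mul_sub, hmk k, sub_self]
    exact sub_eq_zero.mp (obs_cancel hobs2 hz)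
  -- d = dh
  have hd : d = dh := by
    have hle1 : d ≤ dh := by
      have h1 : Matrix.rank (1 : Mat d d) = d := by
        rw [Matrix.rank_one, Fintype.card_fin]
      have h2 : Matrix.rank (T1 * T2) ≤ dh := by
        refine le_trans (Matrix.rank_mul_le_left T1 T2) ?_
        exact le_trans (Matrix.rank_le_card_width T1) (le_of_eq (Fintype.card_fin dh))
      rw [hT1T2, h1] at h2
      exact h2
    have hle2 : dh ≤ d := by
      have h1 : Matrix.rank (1 : Mat dh dh) = dh := by
        rw [Matrix.rank_one, Fintype.card_fin]
      have h2 : Matrix.rank (T2 * T1) ≤ d := by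
        refine le_trans (Matrix.rank_mul_le_left T2 T1) ?_
        exact le_trans (Matrix.rank_le_card_width T2) (le_of_eq (Fintype.card_fin d))
      rw [hT2T1, h1] at h2
      exact h2
    exact le_antisymm hle1 hle2
  subst hd
  -- transfer function: D = Dh and the Markov parameters of B agree
  have hQu : IsUnit (ratM Q).det := by
    have h1 : ratM Q = (algebraMap (Polynomial ℝ) (RatFunc ℝ)).mapMatrix Q := rfl
    have h2 : (ratM Q).det = algebraMap (Polynomial ℝ) (RatFunc ℝ) Q.det := by
      rw [h1, ← RingHom.map_det]
    rw [h2]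
    exact isUnit_iff_ne_zero.mpr
      ((map_ne_zero_iff _ (RatFunc.algebraMap_injective ℝ)).mpr hQ)
  have l1 : ratM Q * (ratOf D + GG A C * ratOf B) = ratM P := by
    rw [Matrix.mul_add, ← Matrix.mul_assoc, hQG1, ratOf_eq_ratM D, ratOf_eq_ratM B,
      ← ratM_mul, ← ratM_mul, ← ratM_add, hPB1]
  have l2 : ratM Q * (ratOf Dh + GG Ah Ch * ratOf Bh) = ratM P := by
    rw [Matrix.mul_add, ← Matrix.mul_assoc, hQG2, ratOf_eq_ratM Dh, ratOf_eq_ratM Bh,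
      ← ratM_mul, ← ratM_mul, ← ratM_add, hPB2]
  have htr : ratOf D + GG A C * ratOf B = ratOf Dh + GG Ah Ch * ratOf Bh := by
    calc ratOf D + GG A C * ratOf B
        = (ratM Q)⁻¹ * (ratM Q * (ratOf D + GG A C * ratOf B)) := by
          rw [← Matrix.mul_assoc, Matrix.nonsing_inv_mul _ hQu, Matrix.one_mul]
      _ = (ratM Q)⁻¹ * (ratM Q * (ratOf Dh + GG Ah Ch * ratOf Bh)) := by rw [l1, l2]
      _ = ratOf Dh + GG Ah Ch * ratOf Bh := by
          rw [← Matrix.mul_assoc, Matrix.nonsing_inv_mul _ hQu, Matrix.one_mul]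
  have hDB : GG A C * ratOf B = GG Ah Ch * ratOf Bh + ratM ((Dh - D).map Polynomial.C) := by
    rw [← ratOf_eq_ratM, ratOf_sub]
    have h0 : GG A C * ratOf B = (ratOf D + GG A C * ratOf B) - ratOf D := by abel
    rw [h0, htr]
    abel
  have hΔ := SP A C Ah Ch B Bh _ hDB
  have hDh : Dh = D := sub_eq_zero.mp (map_C_eq_zero hΔ)
  have hGB : GG A C * ratOf B = GG Ah Ch * ratOf Bh := by
    rw [hDB, hΔ, ratM_zero, add_zero]
  have hMkB : ∀ k : ℕ, C * A ^ k * B = Ch * Ah ^ k * Bh := markov A C Ah Ch B Bh hGB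
  -- Markov parameters relating the two realizations through T2
  have hGT : GG A C * ratOf (1 : Mat d d) = GG Ah Ch * ratOf T2 := by
    rw [ratOf_one, Matrix.mul_one]
    exact hT2
  have hCT : ∀ k : ℕ, C * A ^ k = Ch * Ah ^ k * T2 := by
    intro k
    have hmk := markov A C Ah Ch 1 T2 hGT k
    rwa [Matrix.mul_one] at hmk
  refine ⟨rfl, T2, ?_, ?_, ?_, ?_, hDh⟩
  · exact Matrix.isUnit_det_of_left_inverse hT1T2
  · -- Ah * T2 = T2 * A
    have hsub : Matrix.submatrix Ah (Fin.cast rfl) (Fin.cast rfl) = Ah := by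
      ext i j; rfl
    rw [hsub]
    have hz : ∀ k : ℕ, Ch * Ah ^ k * (Ah * T2 - T2 * A) = 0 := by
      intro k
      rw [Matrix.mul_sub]
      have e1 : Ch * Ah ^ k * (Ah * T2) = Ch * Ah ^ (k + 1) * T2 := by
        rw [← Matrix.mul_assoc, Matrix.mul_assoc Ch, ← pow_succ]
      have e2 : Ch * Ah ^ k * (T2 * A) = (C * A ^ k) * A := by
        rw [← Matrix.mul_assoc, ← hCT k]
      rw [e1, e2, ← hCT (k + 1), Matrix.mul_assoc, ← pow_succ, sub_self]
    exact sub_eq_zero.mp (obs_cancel hobs2 hz)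
  · -- Bh = T2 * B
    have hsub : Matrix.submatrix Bh (Fin.cast rfl) id = Bh := by
      ext i j; rfl
    rw [hsub]
    have hz : ∀ k : ℕ, Ch * Ah ^ k * (Bh - T2 * B) = 0 := by
      intro k
      rw [Matrix.mul_sub, ← hMkB k, ← Matrix.mul_assoc, ← hCT k, sub_self]
    exact sub_eq_zero.mp (obs_cancel hobs2 hz)
  · -- Ch * T2 = C
    have hsub : Matrix.submatrix Ch id (Fin.cast rfl) = Ch := by
      ext i j; rfl
    rw [hsub]
    have h0 := hCT 0
    rw [pow_zero, pow_zero, Matrix.mul_one, Matrix.mul_one] at h0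
    exact h0.symm

end
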